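/- Let S be a semigroup satisfying conditions (A), (B), (C), and let Q be the set of ~-classes of Σ with the multiplication [a,b][c,d] = [xa, yd]. Then this multiplication is associative: ([a,b][c,d])[p,q] = [a,b]([c,d][p,q]) for all [a,b], [c,d], [p,q] ∈ Q. -/

import Mathlib

/-- The bicyclic semigroup `𝓑` carried by `ℕ × ℕ`, an element being `(r, l)`;
`(m,n)(p,q) = (m - n + t, q - p + t)` with `t = max n p`. -/
structure Bicyclic where
  r : ℕ
  l : ℕ

instance : Mul Bicyclic :=
  ⟨fun x y => ⟨x.r + (max x.l y.r - x.l), y.l + (max x.l y.r - y.r)⟩⟩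

/-- The inverse `(m,n)⁻¹ = (n,m)` in the bicyclic semigroup. -/
def Bicyclic.inv (x : Bicyclic) : Bicyclic := ⟨x.l, x.r⟩

/-- `T` is a left I-order in the bicyclic semigroup `𝓑`. -/
def IsLeftIOrderBic (T : Set Bicyclic) : Prop :=
  ∀ q : Bicyclic, ∃ a ∈ T, ∃ b ∈ T, q = a.inv * b

/-- `r a`, the first coordinate of `φ a` in `𝓑`. -/
def rr {S : Type*} [Mul S] (φ : S →ₙ* Bicyclic) (a : S) : ℕ := (φ a).r

/-- `l a`, the second coordinate of `φ a` in `𝓑`. -/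
def ll {S : Type*} [Mul S] (φ : S →ₙ* Bicyclic) (a : S) : ℕ := (φ a).l

/-- Condition (A): the image of `φ` is a left I-order in `𝓑`. -/
def CondA {S : Type*} [Mul S] (φ : S →ₙ* Bicyclic) : Prop :=
  IsLeftIOrderBic (Set.range (⇑φ))

/-- Condition (B)(i): if `l x, l y ≥ r a` and `x * a = y * a` then `x = y`. -/
def CondBi {S : Type*} [Mul S] (φ : S →ₙ* Bicyclic) : Prop :=
  ∀ x y a : S, rr φ a ≤ ll φ x → rr φ a ≤ ll φ y → x * a = y * a → x = y

/-- Condition (B)(ii): if `r x, r y ≥ l a` and `a * x = a * y` then `x = y`. -/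
def CondBii {S : Type*} [Mul S] (φ : S →ₙ* Bicyclic) : Prop :=
  ∀ x y a : S, ll φ a ≤ rr φ x → ll φ a ≤ rr φ y → a * x = a * y → x = y

/-- Condition (C): for all `b c` there are `x y` with `x * b = y * c`,
`r x = r y`, `l x = r b - l b + max (l b) (l c)` and
`l y = r c - l c + max (l b) (l c)`. -/
def CondC {S : Type*} [Mul S] (φ : S →ₙ* Bicyclic) : Prop :=
  ∀ b c : S, ∃ x y : S, x * b = y * c ∧ rr φ x = rr φ y ∧
    ll φ x = rr φ b + (max (ll φ b) (ll φ c) - ll φ b) ∧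
    ll φ y = rr φ c + (max (ll φ b) (ll φ c) - ll φ c)

/-- `Σ = {(a,b) ∈ S × S : r a = r b}`. -/
abbrev Sig {S : Type*} [Mul S] (φ : S →ₙ* Bicyclic) : Type _ :=
  {p : S × S // rr φ p.1 = rr φ p.2}

/-- The relation `∼` on pairs: `(a,b) ∼ (c,d)` iff there are `x y` with
`x * a = y * c`, `x * b = y * d`, `l x = r a`, `l y = r c`, `r x = r y`. -/
def simP {S : Type*} [Mul S] (φ : S →ₙ* Bicyclic) (p q : S × S) : Prop :=
  ∃ x y : S, x * p.1 = y * q.1 ∧ x * p.2 = y * q.2 ∧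
    ll φ x = rr φ p.1 ∧ ll φ y = rr φ q.1 ∧ rr φ x = rr φ y

/-- The relation `∼` on `Σ`. -/
def sim {S : Type*} [Mul S] (φ : S →ₙ* Bicyclic) (p q : Sig φ) : Prop :=
  simP φ p.1 q.1

theorem rr_mul {S : Type*} [Mul S] (φ : S →ₙ* Bicyclic) (x a : S) :
    rr φ (x * a) = rr φ x + (max (ll φ x) (rr φ a) - ll φ x) := by
  simp only [rr, ll, map_mul]; rfl

theorem rr_mul_eq {S : Type*} [Mul S] (φ : S →ₙ* Bicyclic) {x a : S}
    (h : rr φ a ≤ ll φ x) : rr φ (x * a) = rr φ x := by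
  have h1 := rr_mul φ x a
  have h2 : max (ll φ x) (rr φ a) = ll φ x := max_eq_left h
  omega

theorem sig_mul_ok {S : Type*} [Mul S] (φ : S →ₙ* Bicyclic) {a b c d x y : S}
    (hab : rr φ a = rr φ b) (hcd : rr φ c = rr φ d)
    (hx : ll φ x = rr φ b + (max (ll φ b) (ll φ c) - ll φ b))
    (hy : ll φ y = rr φ c + (max (ll φ b) (ll φ c) - ll φ c))
    (hr : rr φ x = rr φ y) : rr φ (x * a) = rr φ (y * d) := by
  have h1 := rr_mul_eq φ (x := x) (a := a)
    (by have := le_max_left (ll φ b) (ll φ c); omega)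
  have h2 := rr_mul_eq φ (x := y) (a := d)
    (by have := le_max_right (ll φ b) (ll φ c); omega)
  omega

/-- The set `Q` of `∼`-classes of `Σ`. -/
def QT {S : Type*} [Mul S] (φ : S →ₙ* Bicyclic) : Type _ := Quot (sim φ)

/-- The `∼`-class `[a,b]` of an element of `Σ`. -/
def cls {S : Type*} [Mul S] (φ : S →ₙ* Bicyclic) (p : Sig φ) : QT φ :=
  Quot.mk _ p

/-- Packaging `(a, b)` with `r a = r b` as an element of `Σ`. -/
def mkSig {S : Type*} [Mul S] (φ : S →ₙ* Bicyclic) (a b : S)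
    (h : rr φ a = rr φ b) : Sig φ := ⟨(a, b), h⟩

/-- A chosen witness `x` from condition (C) applied to `b, c`. -/
noncomputable def cx {S : Type*} [Mul S] {φ : S →ₙ* Bicyclic} (hC : CondC φ)
    (b c : S) : S := (hC b c).choose

/-- A chosen witness `y` from condition (C) applied to `b, c`. -/
noncomputable def cy {S : Type*} [Mul S] {φ : S →ₙ* Bicyclic} (hC : CondC φ)
    (b c : S) : S := (hC b c).choose_spec.choose

theorem c_spec {S : Type*} [Mul S] {φ : S →ₙ* Bicyclic} (hC : CondC φ) (b c : S) :
    cx hC b c * b = cy hC b c * c ∧ rr φ (cx hC b c) = rr φ (cy hC b c) ∧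
    ll φ (cx hC b c) = rr φ b + (max (ll φ b) (ll φ c) - ll φ b) ∧
    ll φ (cy hC b c) = rr φ c + (max (ll φ b) (ll φ c) - ll φ c) :=
  (hC b c).choose_spec.choose_spec

/-- Representative-level multiplication: `(a,b) · (c,d) = (x * a, y * d)` where
`x, y` are the witnesses from condition (C) for `b, c`. -/
noncomputable def pairMul {S : Type*} [Mul S] {φ : S →ₙ* Bicyclic} (hC : CondC φ)
    (p q : Sig φ) : Sig φ :=
  ⟨(cx hC p.1.2 q.1.1 * p.1.1, cy hC p.1.2 q.1.1 * q.1.2),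
    sig_mul_ok φ p.2 q.2 (c_spec hC p.1.2 q.1.1).2.2.1
      (c_spec hC p.1.2 q.1.1).2.2.2 (c_spec hC p.1.2 q.1.1).2.1⟩

/-- The multiplication `[a,b][c,d] = [x*a, y*d]` on the set `Q` of `∼`-classes. -/
noncomputable def qmul {S : Type*} [Mul S] {φ : S →ₙ* Bicyclic} (hC : CondC φ)
    (u v : QT φ) : QT φ :=
  cls φ (pairMul hC (Quot.out u) (Quot.out v))

theorem ll_cx_self {S : Type*} [Mul S] {φ : S →ₙ* Bicyclic} (hC : CondC φ)
    (a : S) : ll φ (cx hC a a) = rr φ a := by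
  have h := (c_spec hC a a).2.2.1
  have h2 : max (ll φ a) (ll φ a) = ll φ a := max_self _
  omega

/-- The embedding `θ : S → Q`, `a θ = [x, x*a]` for a chosen `x` with `l x = r a`. -/
noncomputable def theta {S : Type*} [Mul S] {φ : S →ₙ* Bicyclic} (hC : CondC φ)
    (a : S) : QT φ :=
  cls φ ⟨(cx hC a a, cx hC a a * a), (rr_mul_eq φ (ll_cx_self hC a).ge).symm⟩

/-- The inverse `[a,b]⁻¹ = [b,a]` on `Q`. -/
noncomputable def qinv {S : Type*} [Mul S] {φ : S →ₙ* Bicyclic} (u : QT φ) :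
    QT φ :=
  cls φ ⟨((Quot.out u).1.2, (Quot.out u).1.1), (Quot.out u).2.symm⟩

section AssocProof

variable {S : Type*} [Semigroup S] {φ : S →ₙ* Bicyclic}

theorem ll_mul' (φ : S →ₙ* Bicyclic) (x a : S) :
    ll φ (x * a) = ll φ a + (max (ll φ x) (rr φ a) - rr φ a) := by
  simp only [rr, ll, map_mul]; rfl

theorem pe (φ : S →ₙ* Bicyclic) {x a : S} (h : rr φ a ≤ ll φ x) :
    rr φ (x * a) = rr φ x ∧ ll φ (x * a) = ll φ a + (ll φ x - rr φ a) :=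
  ⟨rr_mul_eq φ h, by rw [ll_mul' φ x a, max_eq_left h]⟩

theorem simP_refl (hC : CondC φ) (p : S × S) : simP φ p p :=
  ⟨cx hC p.1 p.1, cx hC p.1 p.1, rfl, rfl, ll_cx_self hC p.1, ll_cx_self hC p.1, rfl⟩

theorem simP_symm {p q : S × S} (h : simP φ p q) : simP φ q p := by
  obtain ⟨x, y, h1, h2, h3, h4, h5⟩ := h
  exact ⟨y, x, h1.symm, h2.symm, h4, h3, h5.symm⟩

theorem simP_trans (hC : CondC φ) {p q z : S × S} (hpq : simP φ p q) (hqz : simP φ q z) :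
    simP φ p z := by
  obtain ⟨x, y, e1, e2, l1, l2, r1⟩ := hpq
  obtain ⟨u, v, f1, f2, m1, m2, s1⟩ := hqz
  obtain ⟨g1, g2, g3, g4⟩ := c_spec hC y u
  set W := cx hC y u with hW
  set Z := cy hC y u with hZ
  clear_value W Z
  clear hW hZ
  have hlW : ll φ W = rr φ y := by omega
  have hlZ : ll φ Z = rr φ u := by omega
  obtain ⟨pw1, pw2⟩ := pe φ (show rr φ x ≤ ll φ W by omega)
  obtain ⟨pz1, pz2⟩ := pe φ (show rr φ v ≤ ll φ Z by omega)
  refine ⟨W * x, Z * v, ?_, ?_, by omega, by omega, by omega⟩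
  · calc W * x * p.1 = W * (x * p.1) := mul_assoc _ _ _
      _ = W * (y * q.1) := by rw [e1]
      _ = (W * y) * q.1 := (mul_assoc _ _ _).symm
      _ = (Z * u) * q.1 := by rw [g1]
      _ = Z * (u * q.1) := mul_assoc _ _ _
      _ = Z * (v * z.1) := by rw [f1]
      _ = Z * v * z.1 := (mul_assoc _ _ _).symm
  · calc W * x * p.2 = W * (x * p.2) := mul_assoc _ _ _
      _ = W * (y * q.2) := by rw [e2]
      _ = (W * y) * q.2 := (mul_assoc _ _ _).symm
      _ = (Z * u) * q.2 := by rw [g1]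
      _ = Z * (u * q.2) := mul_assoc _ _ _
      _ = Z * (v * z.2) := by rw [f2]
      _ = Z * v * z.2 := (mul_assoc _ _ _).symm

/-- Uniqueness of C-type witnesses, up to `simP` of the products. -/
theorem lemU (hBi : CondBi φ) (hC : CondC φ) {a b c d x y x' y' : S}
    (hra : rr φ a = rr φ b) (hrd : rr φ d = rr φ c)
    (hxb : x * b = y * c) (hx'b : x' * b = y' * c)
    (hlx : ll φ x = ll φ x') (hly : ll φ y = ll φ y')
    (hbx : rr φ b ≤ ll φ x) (hcy : rr φ c ≤ ll φ y)
    (hrx : rr φ x = rr φ y) (hrx' : rr φ x' = rr φ y') :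
    simP φ (x * a, y * d) (x' * a, y' * d) := by
  obtain ⟨g1, g2, g3, g4⟩ := c_spec hC x x'
  set W := cx hC x x' with hW
  set Z := cy hC x x' with hZ
  clear_value W Z
  clear hW hZ
  have hlW : ll φ W = rr φ x := by omega
  have hlZ : ll φ Z = rr φ x' := by omega
  obtain ⟨pw1, pw2⟩ := pe φ (show rr φ y ≤ ll φ W by omega)
  obtain ⟨pz1, pz2⟩ := pe φ (show rr φ y' ≤ ll φ Z by omega)
  have key : W * y = Z * y' := by
    refine hBi _ _ c (by omega) (by omega) ?_
    calc (W * y) * c = W * (y * c) := mul_assoc _ _ _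
      _ = W * (x * b) := by rw [hxb]
      _ = (W * x) * b := (mul_assoc _ _ _).symm
      _ = (Z * x') * b := by rw [g1]
      _ = Z * (x' * b) := mul_assoc _ _ _
      _ = Z * (y' * c) := by rw [hx'b]
      _ = (Z * y') * c := (mul_assoc _ _ _).symm
  obtain ⟨q1, q2⟩ := pe φ (show rr φ a ≤ ll φ x by omega)
  obtain ⟨q1', q2'⟩ := pe φ (show rr φ a ≤ ll φ x' by omega)
  refine ⟨W, Z, ?_, ?_, ?_, ?_, by omega⟩
  case refine_3 => show ll φ W = rr φ (x * a); omega
  case refine_4 => show ll φ Z = rr φ (x' * a); omega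
  · calc W * (x * a) = (W * x) * a := (mul_assoc _ _ _).symm
      _ = (Z * x') * a := by rw [g1]
      _ = Z * (x' * a) := mul_assoc _ _ _
  · calc W * (y * d) = (W * y) * d := (mul_assoc _ _ _).symm
      _ = (Z * y') * d := by rw [key]
      _ = Z * (y' * d) := mul_assoc _ _ _

/-- `pairMul` absorbs simultaneous left translations of its arguments. -/
theorem lemT (hBi : CondBi φ) (hC : CondC φ) {a b c d g h : S}
    (hab : rr φ a = rr φ b) (hcd : rr φ c = rr φ d)
    (hg : ll φ g = rr φ a) (hh : ll φ h = rr φ c) :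
    simP φ (cx hC (g * b) (h * c) * (g * a), cy hC (g * b) (h * c) * (h * d))
      (cx hC b c * a, cy hC b c * d) := by
  obtain ⟨e1, r1, lx, ly⟩ := c_spec hC b c
  obtain ⟨e2, r2, lx1, ly1⟩ := c_spec hC (g * b) (h * c)
  set x := cx hC b c with hx
  set y := cy hC b c with hy
  set x₁ := cx hC (g * b) (h * c) with hx1
  set y₁ := cy hC (g * b) (h * c) with hy1
  clear_value x y x₁ y₁
  clear hx hy hx1 hy1
  obtain ⟨pgb1, pgb2⟩ := pe φ (show rr φ b ≤ ll φ g by omega)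
  obtain ⟨phc1, phc2⟩ := pe φ (show rr φ c ≤ ll φ h by omega)
  obtain ⟨px1, px2⟩ := pe φ (show rr φ g ≤ ll φ x₁ by omega)
  obtain ⟨py1, py2⟩ := pe φ (show rr φ h ≤ ll φ y₁ by omega)
  have hU := lemU (a := a) (d := d) hBi hC hab hcd.symm
    (x := x₁ * g) (y := y₁ * h) (x' := x) (y' := y)
    (by rw [mul_assoc, mul_assoc]; exact e2) e1
    (by omega) (by omega) (by omega) (by omega) (by omega) (by omega)
  rwa [mul_assoc, mul_assoc] at hU

theorem sim_congr (hBi : CondBi φ) (hC : CondC φ) {p p' q q' : Sig φ}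
    (hp : sim φ p p') (hq : sim φ q q') :
    sim φ (pairMul hC p q) (pairMul hC p' q') := by
  obtain ⟨⟨a, b⟩, hab⟩ := p
  obtain ⟨⟨a', b'⟩, hab'⟩ := p'
  obtain ⟨⟨c, d⟩, hcd⟩ := q
  obtain ⟨⟨c', d'⟩, hcd'⟩ := q'
  obtain ⟨u, v, e1, e2, l1, l2, r1⟩ := hp
  obtain ⟨s, t, f1, f2, m1, m2, s1⟩ := hq
  have T1 := lemT hBi hC hab hcd (g := u) (h := s) l1 m1
  have T2 := lemT hBi hC hab' hcd' (g := v) (h := t) l2 m2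
  rw [e1, e2, f1, f2] at T1
  exact simP_trans hC (simP_symm T1) T2

set_option maxHeartbeats 2000000 in
/-- Representative-level associativity, pair version. -/
theorem lemAssocP (hBi : CondBi φ) (hC : CondC φ) {a b c d e f : S}
    (hab : rr φ a = rr φ b) (hcd : rr φ c = rr φ d) (hef : rr φ e = rr φ f) :
    simP φ (cx hC (cy hC b c * d) e * (cx hC b c * a), cy hC (cy hC b c * d) e * f)
      (cx hC b (cx hC d e * c) * a, cy hC b (cx hC d e * c) * (cy hC d e * f)) := by
  obtain ⟨e1, r1, lx, ly⟩ := c_spec hC b c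
  set x := cx hC b c with hxdef
  set y := cy hC b c with hydef
  clear_value x y
  clear hxdef hydef
  obtain ⟨e3, r3, ls, lt⟩ := c_spec hC d e
  set s := cx hC d e with hsdef
  set t := cy hC d e with htdef
  clear_value s t
  clear hsdef htdef
  obtain ⟨p_yd1, p_yd2⟩ := pe φ (show rr φ d ≤ ll φ y by omega)
  obtain ⟨p_xa1, p_xa2⟩ := pe φ (show rr φ a ≤ ll φ x by omega)
  obtain ⟨p_sc1, p_sc2⟩ := pe φ (show rr φ c ≤ ll φ s by omega)
  obtain ⟨p_tf1, p_tf2⟩ := pe φ (show rr φ f ≤ ll φ t by omega)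
  obtain ⟨e2, r2, lx2, ly2⟩ := c_spec hC (y * d) e
  set x₂ := cx hC (y * d) e with hx2def
  set y₂ := cy hC (y * d) e with hy2def
  clear_value x₂ y₂
  clear hx2def hy2def
  obtain ⟨p_x2y1, p_x2y2⟩ := pe φ (show rr φ y ≤ ll φ x₂ by omega)
  obtain ⟨p_x2x1, p_x2x2⟩ := pe φ (show rr φ x ≤ ll φ x₂ by omega)
  obtain ⟨p_x2xa1, p_x2xa2⟩ := pe φ (show rr φ (x * a) ≤ ll φ x₂ by omega)
  obtain ⟨e4, r4, lx3, ly3⟩ := c_spec hC b (s * c)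
  set x₃ := cx hC b (s * c) with hx3def
  set y₃ := cy hC b (s * c) with hy3def
  clear_value x₃ y₃
  clear hx3def hy3def
  obtain ⟨p_x3a1, p_x3a2⟩ := pe φ (show rr φ a ≤ ll φ x₃ by omega)
  obtain ⟨e5, r5, lP, lR⟩ := c_spec hC (x₂ * y) s
  set P := cx hC (x₂ * y) s with hPdef
  set R := cy hC (x₂ * y) s with hRdef
  clear_value P R
  clear hPdef hRdef
  have hKs : ll φ s ≤ ll φ (x₂ * y) := by
    clear * - ly p_yd1 p_yd2 lx2 p_x2y2 ls hcd
    omega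
  have hlPR : ll φ P = rr φ (x₂ * y) := by
    clear * - lP hKs
    omega
  have hRy3 : ll φ R = ll φ y₃ := by
    clear * - lR ly3 ls p_sc1 p_sc2 lx2 p_x2y2 p_yd1 p_yd2 ly hcd r1
    omega
  obtain ⟨p_Py21, p_Py22⟩ := pe φ (show rr φ y₂ ≤ ll φ P by omega)
  obtain ⟨p_Rt1, p_Rt2⟩ := pe φ (show rr φ t ≤ ll φ R by omega)
  have h_can1 : P * y₂ = R * t := by
    refine hBi _ _ e (by omega) (by omega) ?_
    calc (P * y₂) * e = P * (y₂ * e) := mul_assoc _ _ _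
      _ = P * (x₂ * (y * d)) := by rw [e2]
      _ = P * ((x₂ * y) * d) := by rw [mul_assoc x₂ y d]
      _ = (P * (x₂ * y)) * d := (mul_assoc _ _ _).symm
      _ = (R * s) * d := by rw [e5]
      _ = R * (s * d) := mul_assoc _ _ _
      _ = R * (t * e) := by rw [e3]
      _ = (R * t) * e := (mul_assoc _ _ _).symm
  obtain ⟨e6, r6, lF, lG⟩ := c_spec hC R y₃
  set F := cx hC R y₃ with hFdef
  set G := cy hC R y₃ with hGdef
  clear_value F G
  clear hFdef hGdef
  have hlF : ll φ F = rr φ R := by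
    clear * - lF hRy3
    omega
  have hlG : ll φ G = rr φ y₃ := by
    clear * - lG hRy3
    omega
  obtain ⟨p_FP1, p_FP2⟩ := pe φ (show rr φ P ≤ ll φ F by omega)
  obtain ⟨p_FPx1, p_FPx2⟩ := pe φ (show rr φ (x₂ * x) ≤ ll φ (F * P) by omega)
  obtain ⟨p_Gx31, p_Gx32⟩ := pe φ (show rr φ x₃ ≤ ll φ G by omega)
  have h_can2 : (F * P) * (x₂ * x) = G * x₃ := by
    refine hBi _ _ b (by omega) (by omega) ?_
    calc ((F * P) * (x₂ * x)) * b = (F * P) * ((x₂ * x) * b) := mul_assoc _ _ _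
      _ = (F * P) * (x₂ * (x * b)) := by rw [mul_assoc x₂ x b]
      _ = (F * P) * (x₂ * (y * c)) := by rw [e1]
      _ = (F * P) * ((x₂ * y) * c) := by rw [mul_assoc x₂ y c]
      _ = ((F * P) * (x₂ * y)) * c := (mul_assoc _ _ _).symm
      _ = (F * (P * (x₂ * y))) * c := by rw [mul_assoc F P (x₂ * y)]
      _ = (F * (R * s)) * c := by rw [e5]
      _ = ((F * R) * s) * c := by rw [mul_assoc F R s]
      _ = ((G * y₃) * s) * c := by rw [e6]
      _ = (G * y₃) * (s * c) := mul_assoc _ _ _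
      _ = G * (y₃ * (s * c)) := mul_assoc _ _ _
      _ = G * (x₃ * b) := by rw [e4]
      _ = (G * x₃) * b := (mul_assoc _ _ _).symm
  refine ⟨F * P, G, ?_, ?_, ?_, ?_, by clear * - p_FP1 r6; omega⟩
  case refine_3 =>
    show ll φ (F * P) = rr φ (x₂ * (x * a))
    clear * - p_FP2 hlF hlPR r5 p_x2y1 p_x2xa1
    omega
  case refine_4 =>
    show ll φ G = rr φ (x₃ * a)
    clear * - hlG r4 p_x3a1
    omega
  · calc (F * P) * (x₂ * (x * a)) = (F * P) * ((x₂ * x) * a) := by rw [mul_assoc x₂ x a]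
      _ = ((F * P) * (x₂ * x)) * a := (mul_assoc _ _ _).symm
      _ = (G * x₃) * a := by rw [h_can2]
      _ = G * (x₃ * a) := mul_assoc _ _ _
  · calc (F * P) * (y₂ * f) = ((F * P) * y₂) * f := (mul_assoc _ _ _).symm
      _ = (F * (P * y₂)) * f := by rw [mul_assoc F P y₂]
      _ = (F * (R * t)) * f := by rw [h_can1]
      _ = ((F * R) * t) * f := by rw [mul_assoc F R t]
      _ = ((G * y₃) * t) * f := by rw [e6]
      _ = (G * y₃) * (t * f) := mul_assoc _ _ _
      _ = G * (y₃ * (t * f)) := mul_assoc _ _ _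

theorem pair_assoc (hBi : CondBi φ) (hC : CondC φ) (p q w : Sig φ) :
    sim φ (pairMul hC (pairMul hC p q) w) (pairMul hC p (pairMul hC q w)) := by
  obtain ⟨⟨a, b⟩, hab⟩ := p
  obtain ⟨⟨c, d⟩, hcd⟩ := q
  obtain ⟨⟨e, f⟩, hef⟩ := w
  exact lemAssocP hBi hC hab hcd hef

end AssocProof

theorem sim_equiv {S : Type*} [Semigroup S] {φ : S →ₙ* Bicyclic} (hC : CondC φ) :
    Equivalence (sim φ) :=
  ⟨fun p => simP_refl hC p.1, fun h => simP_symm h, fun h1 h2 => simP_trans hC h1 h2⟩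

/-- The multiplication on the set `Q` of `∼`-classes is associative. -/
theorem stmt11 {S : Type*} [Semigroup S] (φ : S →ₙ* Bicyclic)
    (hA : CondA φ) (hBi : CondBi φ) (hBii : CondBii φ) (hC : CondC φ) :
    ∀ u v w : QT φ, qmul hC (qmul hC u v) w = qmul hC u (qmul hC v w) := by
  intro u v w
  have hEq : Equivalence (sim φ) := sim_equiv hC
  have key : ∀ (z : QT φ) (p : Sig φ), z = cls φ p → sim φ (Quot.out z) p := by
    intro z p hz
    have h : Quot.mk (sim φ) (Quot.out z) = Quot.mk (sim φ) p := by
      exact (Quot.out_eq (r := sim φ) z).trans hz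
    exact hEq.eqvGen_iff.mp (Quot.eqvGen_exact h)
  have h1 : sim φ (Quot.out (qmul hC u v)) (pairMul hC (Quot.out u) (Quot.out v)) :=
    key _ _ rfl
  have h2 : sim φ (Quot.out (qmul hC v w)) (pairMul hC (Quot.out v) (Quot.out w)) :=
    key _ _ rfl
  show cls φ (pairMul hC (Quot.out (qmul hC u v)) (Quot.out w)) =
    cls φ (pairMul hC (Quot.out u) (Quot.out (qmul hC v w)))
  exact Quot.sound (hEq.trans (sim_congr hBi hC h1 (hEq.refl _))
    (hEq.trans (pair_assoc hBi hC _ _ _)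
      (sim_congr hBi hC (hEq.refl _) (hEq.symm h2))))
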